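/- Let p be an odd prime (or p = 2 with k ≥ 2), 1 ≤ k ≤ ν, and let Ω_p^{k,ν} act on ℤ/p^νℤ by multiplication. Then the second group cohomology H²(Ω_p^{k,ν}, ℤ/p^νℤ) vanishes. -/

import Mathlib

open groupCohomology

/-- The representation of a subgroup `H` of `(ZMod n)ˣ` on `ZMod n` by multiplication. -/
noncomputable def mulRep (n : ℕ) (H : Subgroup (ZMod n)ˣ) : Representation ℤ H (ZMod n) :=
  ((Algebra.lmul ℤ (ZMod n)).toRingHom.toMonoidHom).comp
    ((Units.coeHom (ZMod n)).comp H.subtype)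

open Finset

lemma binom_step (p : ℕ) (hp : p.Prime) (K : ℕ) (hK : 1 ≤ K)
    (hpK : 2 ≤ (p - 1) * K) (u : ℤ) :
    ∃ w : ℤ, (1 + (p : ℤ) ^ K * u) ^ p = 1 + (p : ℤ) ^ (K + 1) * (u + p * w) := by
  have hp2 : 2 ≤ p := hp.two_le
  set t : ℤ := (p : ℤ) ^ K * u with ht
  have hexp : (1 + t) ^ p = ∑ j ∈ range (p + 1), t ^ j * (p.choose j : ℤ) := by
    rw [add_comm 1 t, add_pow]
    refine Finset.sum_congr rfl fun j hj => by rw [one_pow, mul_one]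
  have hsplit : ∑ j ∈ range (p + 1), t ^ j * (p.choose j : ℤ)
      = (∑ j ∈ Finset.Ico 0 2, t ^ j * (p.choose j : ℤ))
        + ∑ j ∈ Finset.Ico 2 (p + 1), t ^ j * (p.choose j : ℤ) := by
    rw [Finset.range_eq_Ico]
    exact (Finset.sum_Ico_consecutive _ (by omega) (by omega)).symm
  have hlow : ∑ j ∈ Finset.Ico 0 2, t ^ j * (p.choose j : ℤ) = 1 + p * t := by
    have : Finset.Ico 0 2 = {0, 1} := by decide
    rw [this]
    simp [Nat.choose_one_right, mul_comm]
  have hdvd : ((p : ℤ) ^ (K + 2)) ∣ ∑ j ∈ Finset.Ico 2 (p + 1), t ^ j * (p.choose j : ℤ) := by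
    refine Finset.dvd_sum fun j hj => ?_
    simp only [Finset.mem_Ico] at hj
    rcases eq_or_lt_of_le (Nat.lt_succ_iff.mp hj.2) with hje | hjl
    · -- j = p
      have h1 : (p : ℤ) ^ (K + 2) ∣ t ^ j := by
        rw [ht, mul_pow, ← pow_mul]
        refine Dvd.dvd.mul_right ?_ _
        refine pow_dvd_pow _ ?_
        subst hje
        have e : K * j = (j - 1) * K + K := by
          have h3 : ((j - 1) + 1) * K = (j - 1) * K + K := by rw [add_mul, one_mul]
          have h4 : (j - 1) + 1 = j := by omega
          rw [h4] at h3
          rw [mul_comm, h3]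
        linarith [e, hpK, hK]
      exact h1.mul_right _
    · -- 2 ≤ j < p
      have h1 : (p : ℤ) ∣ (p.choose j : ℤ) := by
        exact_mod_cast Int.natCast_dvd_natCast.mpr (hp.dvd_choose_self (by omega) hjl)
      have h2 : (p : ℤ) ^ (K + 1) ∣ t ^ j := by
        rw [ht, mul_pow, ← pow_mul]
        refine Dvd.dvd.mul_right ?_ _
        refine pow_dvd_pow _ ?_
        have e : K * 2 ≤ K * j := Nat.mul_le_mul_left K hj.1
        linarith [e, hK]
      have : (p : ℤ) ^ (K + 2) = (p : ℤ) ^ (K + 1) * p := by ring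
      rw [this]
      exact mul_dvd_mul h2 h1
  obtain ⟨w, hw⟩ := hdvd
  refine ⟨w, ?_⟩
  rw [hexp, hsplit, hlow, hw]
  ring

lemma keyNT (p : ℕ) (hp : p.Prime) (k : ℕ) (hk : 1 ≤ k)
    (h2 : Odd p ∨ (p = 2 ∧ 2 ≤ k)) (m : ℕ) :
    ∃ u : ℤ, (1 + (p : ℤ) ^ k) ^ (p ^ m) = 1 + (p : ℤ) ^ (k + m) * u ∧ ¬ (p : ℤ) ∣ u := by
  have hpZ : Prime (p : ℤ) := Nat.prime_iff_prime_int.1 hp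
  induction m with
  | zero =>
    refine ⟨1, by simp, by simpa using hpZ.not_dvd_one⟩
  | succ m ih =>
    obtain ⟨u, hu, hpu⟩ := ih
    have hpK : 2 ≤ (p - 1) * (k + m) := by
      rcases h2 with ho | ⟨hp2, hk2⟩
      · have hp3 : 3 ≤ p := by
          rcases Nat.Prime.eq_two_or_odd hp with h | h
          · exfalso; rw [h] at ho; exact (by decide : ¬ Odd 2) ho
          · have := hp.two_le; omega
        calc 2 = 2 * 1 := by omega
        _ ≤ (p - 1) * (k + m) := Nat.mul_le_mul (by omega) (by omega)
      · calc 2 ≤ k + m := by omega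
        _ = 1 * (k + m) := (one_mul _).symm
        _ ≤ (p - 1) * (k + m) := Nat.mul_le_mul (by omega) le_rfl
    obtain ⟨w, hw⟩ := binom_step p hp (k + m) (by omega) hpK u
    refine ⟨u + p * w, ?_, ?_⟩
    · rw [pow_succ, pow_mul, hu, hw, show k + (m + 1) = (k + m) + 1 by omega]
    · intro hd
      exact hpu (by simpa using hd.sub (Dvd.intro w rfl))



theorem cyclic_mem_twoCoboundaries {G : Type} [Group G] (A : Rep ℤ G) (τ : G)
    (n : ℕ) (hn : 0 < n) (hτn : τ ^ n = 1)
    (hord : ∀ i < n, τ ^ i = 1 → i = 0)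
    (hgen : ∀ g : G, ∃ i < n, τ ^ i = g)
    (hnorm : ∀ m : A, A.ρ τ m = m → ∃ a : A, ∑ j ∈ Finset.range n, A.ρ (τ ^ j) a = m)
    (f : cocycles₂ A) : (f : G × G → A) ∈ coboundaries₂ A := by
  classical
  suffices H : ∃ x : G → A, ∀ g h : G, A.ρ g (x h) - x (g * h) + x g = f.1 (g, h) by
    obtain ⟨x, hx⟩ := H
    exact ⟨x, funext fun gh => by rw [d₁₂_hom_apply]; exact hx gh.1 gh.2⟩
  have hcoc := (mem_cocycles₂_iff (A := A) f.1).1 f.2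
  set v : A := f.1 (1, 1) with hv
  set F : G → G → A := fun g h => f.1 (g, h) - A.ρ g v with hF
  have hF1 : ∀ g, F 1 g = 0 := by
    intro g
    have h1 : f.1 (1, g) = f.1 (1, 1) := cocycles₂_map_one_fst f g
    show f.1 (1, g) - A.ρ 1 v = 0
    have e : A.ρ (1 : G) v = v := by rw [map_one]; rfl
    rw [e, hv, h1, sub_self]
  have hF2 : ∀ g, F g 1 = 0 := by
    intro g
    have h1 : f.1 (g, 1) = A.ρ g (f.1 (1, 1)) := cocycles₂_map_one_snd f g
    show f.1 (g, 1) - A.ρ g v = 0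
    rw [h1, hv, sub_self]
  have hFcoc : ∀ g h j : G, F (g * h) j + F g h = A.ρ g (F h j) + F g (h * j) := by
    intro g h j
    have h1 := hcoc g h j
    have h2 : A.ρ (g * h) v = A.ρ g (A.ρ h v) := by rw [map_mul]; rfl
    simp only [hF, sub_add_sub_comm, map_sub]
    rw [h1, h2]
  have hρpow : ∀ (a b : ℕ) (m : A), A.ρ (τ ^ (a + b)) m = A.ρ (τ ^ a) (A.ρ (τ ^ b) m) := by
    intro a b m; rw [pow_add, map_mul]; rfl
  set Y : ℕ → A := fun i => F τ (τ ^ i) with hY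
  set X : ℕ → A := fun a => Nat.rec (motive := fun _ => A) (0 : A)
    (fun a Xa => A.ρ τ Xa + Y a) a with hXdef
  have hX0 : X 0 = 0 := rfl
  have hXs : ∀ a, X (a + 1) = A.ρ τ (X a) + Y a := fun a => rfl
  have hY0 : Y 0 = 0 := by
    show F τ (τ ^ 0) = 0
    rw [pow_zero]; exact hF2 τ
  have hYper : ∀ i, Y (i + n) = Y i := by
    intro i; simp only [hY, pow_add, hτn, mul_one]
  have hX1 : X 1 = 0 := by
    have h := hXs 0
    rw [hX0, map_zero, hY0, add_zero] at h
    simpa using h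
  have master : ∀ a b, X (a + b) = F (τ ^ a) (τ ^ b) + A.ρ (τ ^ a) (X b) + X a := by
    intro a
    induction a with
    | zero =>
      intro b
      rw [Nat.zero_add, pow_zero, hF1, hX0, add_zero, zero_add, map_one]
      rfl
    | succ a ih =>
      intro b
      have hc := hFcoc τ (τ ^ a) (τ ^ b)
      rw [← pow_succ', ← pow_add] at hc
      have hc' : F (τ ^ (a + 1)) (τ ^ b) = A.ρ τ (F (τ ^ a) (τ ^ b)) + Y (a + b) - Y a := by
        have : F (τ ^ (a + 1)) (τ ^ b) + Y a = A.ρ τ (F (τ ^ a) (τ ^ b)) + Y (a + b) := hc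
        rw [eq_sub_iff_add_eq, this]
      have e1 : a + 1 + b = (a + b) + 1 := by omega
      rw [e1, hXs, ih b, map_add, map_add, hc', hXs]
      have e2 : A.ρ (τ ^ (a + 1)) (X b) = A.ρ τ (A.ρ (τ ^ a) (X b)) := by
        rw [pow_succ', map_mul]; rfl
      rw [e2]
      abel
  have hYn : Y n = 0 := by have := hYper 0; rw [Nat.zero_add] at this; rw [this, hY0]
  have hfix : A.ρ τ (X n) = X n := by
    have h1 := master n 1
    rw [hτn, hF1, hX1, map_zero, zero_add, zero_add] at h1
    have h2 : X (n + 1) = A.ρ τ (X n) + Y n := hXs n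
    rw [hYn, add_zero] at h2
    rw [← h2, h1]
  have hfixpow : ∀ j : ℕ, A.ρ (τ ^ j) (X n) = X n := by
    intro j
    induction j with
    | zero => rw [pow_zero, map_one]; rfl
    | succ j ih =>
      have : A.ρ (τ ^ (j + 1)) (X n) = A.ρ (τ ^ j) (A.ρ (τ ^ 1) (X n)) := hρpow j 1 _
      rw [this, pow_one, hfix, ih]
  have hD : ∀ m, X (m + n) = X m + A.ρ (τ ^ m) (X n) := by
    intro m
    induction m with
    | zero => rw [Nat.zero_add, hX0, zero_add, pow_zero, map_one]; rfl
    | succ m ih =>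
      have e1 : m + 1 + n = (m + n) + 1 := by omega
      rw [e1, hXs, ih, hYper, hXs, map_add]
      have e2 : A.ρ (τ ^ (m + 1)) (X n) = A.ρ τ (A.ρ (τ ^ m) (X n)) := by
        rw [pow_succ', map_mul]; rfl
      rw [e2]; abel
  obtain ⟨m₀, hm₀⟩ := hnorm (X n) hfix
  set N : ℕ → A := fun a => ∑ j ∈ Finset.range a, A.ρ (τ ^ j) m₀ with hNdef
  have hN0 : N 0 = 0 := by simp [hNdef]
  have hNs : ∀ a, N (a + 1) = N a + A.ρ (τ ^ a) m₀ := by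
    intro a; simp [hNdef, Finset.sum_range_succ]
  have hNadd : ∀ a b, N (a + b) = N a + A.ρ (τ ^ a) (N b) := by
    intro a b
    induction b with
    | zero => rw [Nat.add_zero, hN0, map_zero, add_zero]
    | succ b ih =>
      have e1 : a + (b + 1) = (a + b) + 1 := by omega
      rw [e1, hNs, ih, hNs, map_add, hρpow]
      abel
  have hNn : N n = X n := hm₀
  choose ind hindlt hind using hgen
  have hidx : ∀ a b r : ℕ, a < n → b < n → r < n → τ ^ (a + b) = τ ^ r →
      a + b = r ∨ a + b = r + n := by
    intro a b r ha hb hr he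
    rcases le_or_gt r (a + b) with h | h
    · have h1 : τ ^ (a + b - r) = 1 := by
        have h2 : τ ^ (a + b - r) * τ ^ r = (1 : G) * τ ^ r := by
          rw [← pow_add, one_mul, ← he]
          congr 1
          omega
        exact mul_right_cancel h2
      rcases lt_or_ge (a + b - r) n with h2 | h2
      · left; have := hord _ h2 h1; omega
      · right
        have h3 : τ ^ (a + b - r - n) = 1 := by
          have h4 : τ ^ (a + b - r - n) * τ ^ n = τ ^ (a + b - r) := by
            rw [← pow_add]; congr 1; omega
          rw [hτn, mul_one] at h4
          rw [h4, h1]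
        have h5 : a + b - r - n < n := by omega
        have := hord _ h5 h3
        omega
    · exfalso
      have h1 : τ ^ (r - (a + b)) = 1 := by
        have h2 : τ ^ (r - (a + b)) * τ ^ (a + b) = (1 : G) * τ ^ (a + b) := by
          rw [← pow_add, one_mul, he]
          congr 1
          omega
        exact mul_right_cancel h2
      have := hord _ (by omega) h1
      omega
  refine ⟨fun g => N (ind g) - X (ind g) + v, ?_⟩
  intro g h
  show A.ρ g (N (ind h) - X (ind h) + v) - (N (ind (g * h)) - X (ind (g * h)) + v) +
      (N (ind g) - X (ind g) + v) = f.1 (g, h)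
  have hab : τ ^ (ind g + ind h) = τ ^ (ind (g * h)) := by
    rw [pow_add, hind g, hind h, hind (g * h)]
  have hFgh : F g h = X (ind g + ind h) - A.ρ g (X (ind h)) - X (ind g) := by
    have hm := master (ind g) (ind h)
    rw [hind g, hind h] at hm
    rw [hm]; abel
  have hfval : f.1 (g, h) = F g h + A.ρ g v := by
    show _ = f.1 (g, h) - A.ρ g v + A.ρ g v
    rw [sub_add_cancel]
  have hNa := hNadd (ind g) (ind h)
  rw [hind g] at hNa
  rcases hidx (ind g) (ind h) (ind (g * h)) (hindlt g) (hindlt h) (hindlt (g * h)) hab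
    with he | he
  · rw [he] at hFgh hNa
    rw [hfval, hFgh]
    simp only [map_add, map_sub]
    rw [hNa]
    abel
  · rw [he] at hFgh hNa
    rw [hD (ind (g * h))] at hFgh
    have key : N (ind g) + A.ρ g (N (ind h)) =
        N (ind (g * h)) + A.ρ (τ ^ ind (g * h)) (X n) := by
      rw [← hNa, hNadd (ind (g * h)) n, hNn]
    have key2 : A.ρ (τ ^ ind (g * h)) (X n) =
        N (ind g) + A.ρ g (N (ind h)) - N (ind (g * h)) := by
      rw [key]; abel
    rw [key2] at hFgh
    rw [hfval, hFgh]
    simp only [map_add, map_sub]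
    abel


/-- Let `p` be an odd prime (or `p = 2` with `k ≥ 2`), `1 ≤ k ≤ ν`, and let the cyclic group
`Ω_p^{k,ν} = ker((ℤ/p^νℤ)ˣ → (ℤ/p^kℤ)ˣ)` act on `ℤ/p^νℤ` by multiplication. Then the second
group cohomology `H²(Ω_p^{k,ν}, ℤ/p^νℤ)` vanishes. -/
theorem stmt_3 (p : ℕ) (hp : p.Prime) (k ν : ℕ) (hk : 1 ≤ k) (hkν : k ≤ ν)
    (h2 : Odd p ∨ (p = 2 ∧ 2 ≤ k)) :
    Subsingleton (groupCohomology.H2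
      (Rep.of (mulRep (p ^ ν) (ZMod.unitsMap (pow_dvd_pow p hkν)).ker))) := by
  have hp1 : 1 < p := hp.one_lt
  have hpZ : Prime (p : ℤ) := Nat.prime_iff_prime_int.1 hp
  set q := p ^ ν with hq
  have hq1 : 1 < q := Nat.one_lt_pow (by omega) hp1
  haveI : NeZero q := ⟨by omega⟩
  haveI : NeZero (p ^ k) := ⟨by positivity⟩
  set n := p ^ (ν - k) with hn
  have hn0 : 0 < n := pow_pos (by omega) _
  set K := (ZMod.unitsMap (pow_dvd_pow p hkν)).ker with hK
  set A := Rep.of (mulRep (p ^ ν) K) with hA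
  -- the unit 1 + p^k
  have hpdvd : ¬ p ∣ (1 + p ^ k) := by
    intro hd
    have h1 : p ∣ p ^ k := dvd_pow_self p (by omega)
    have h3 : p ∣ 1 := (Nat.dvd_add_right h1).mp (by rwa [Nat.add_comm] at hd)
    have := Nat.le_of_dvd one_pos h3
    omega
  have hcop : Nat.Coprime (1 + p ^ k) q := by
    exact Nat.Coprime.pow_right _ (Nat.coprime_comm.mp (hp.coprime_iff_not_dvd.mpr hpdvd))
  set τu : (ZMod q)ˣ := ZMod.unitOfCoprime _ hcop with hτu
  have hτuval : (τu : ZMod q) = ((1 + p ^ k : ℕ) : ZMod q) := ZMod.coe_unitOfCoprime _ hcop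
  have hτK : τu ∈ K := by
    rw [hK, MonoidHom.mem_ker]
    apply Units.ext
    show (ZMod.castHom (pow_dvd_pow p hkν) (ZMod (p ^ k))) (τu : ZMod q) = 1
    rw [hτuval, map_natCast, Nat.cast_add, Nat.cast_one, ZMod.natCast_self, add_zero]
  set τ : K := ⟨τu, hτK⟩ with hτdef
  have hτpow : ∀ e : ℕ, ((((τ ^ e : K) : (ZMod q)ˣ)) : ZMod q) = ((1 + p ^ k : ℕ) : ZMod q) ^ e := by
    intro e
    rw [SubmonoidClass.coe_pow, Units.val_pow_eq_pow_val, hτuval]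
  -- τ ^ n = 1
  have hxn1 : ((1 + p ^ k : ℕ) : ZMod q) ^ n = 1 := by
    obtain ⟨u, hu, hpu⟩ := keyNT p hp k hk h2 (ν - k)
    have hd : (q : ℤ) ∣ ((1 + p ^ k : ℕ) : ℤ) ^ n - 1 := by
      refine ⟨u, ?_⟩
      rw [hq]
      push_cast
      rw [hu, show k + (ν - k) = ν by omega]
      ring
    have h0 := (ZMod.intCast_zmod_eq_zero_iff_dvd _ q).mpr hd
    push_cast at h0 ⊢
    linear_combination h0
  have hτn : τ ^ n = 1 := by
    apply Subtype.ext
    apply Units.ext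
    show (((τ ^ n : K) : (ZMod q)ˣ) : ZMod q) = ((1 : (ZMod q)ˣ) : ZMod q)
    rw [hτpow, hxn1, Units.val_one]
  -- order
  have hxe1 : ∀ e : ℕ, τ ^ e = 1 → ((1 + p ^ k : ℕ) : ZMod q) ^ e = 1 := by
    intro e he
    rw [← hτpow e, he]
    rfl
  have horder : orderOf τ = n := by
    have hdvd : orderOf τ ∣ n := orderOf_dvd_of_pow_eq_one hτn
    obtain ⟨j, hj, hjo⟩ := (Nat.dvd_prime_pow hp).mp hdvd
    have hje : j = ν - k := by
      by_contra hne
      have hjlt : j < ν - k := lt_of_le_of_ne hj hne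
      have hτe : τ ^ (p ^ (ν - k - 1)) = 1 := by
        apply orderOf_dvd_iff_pow_eq_one.mp
        rw [hjo]
        exact pow_dvd_pow p (by omega)
      have hx := hxe1 _ hτe
      obtain ⟨u, hu, hpu⟩ := keyNT p hp k hk h2 (ν - k - 1)
      have h0 : (((((1 + p ^ k : ℕ) : ℤ)) ^ (p ^ (ν - k - 1)) - 1 : ℤ) : ZMod q) = 0 := by
        push_cast
        push_cast at hx
        linear_combination hx
      have hd := (ZMod.intCast_zmod_eq_zero_iff_dvd _ q).mp h0
      rw [hq] at hd
      push_cast at hd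
      rw [hu, show k + (ν - k - 1) = ν - 1 by omega] at hd
      have hd2 : (p : ℤ) ^ (ν - 1) * (p : ℤ) ∣ (p : ℤ) ^ (ν - 1) * u := by
        rw [← pow_succ, show ν - 1 + 1 = ν by omega]
        convert hd using 1
        ring
      have : (p : ℤ) ∣ u :=
        (mul_dvd_mul_iff_left (pow_ne_zero _ hpZ.ne_zero)).mp hd2
      exact hpu this
    rw [hjo, hje]
  have hord : ∀ i < n, τ ^ i = 1 → i = 0 := by
    intro i hi hτi
    have : n ∣ i := horder ▸ orderOf_dvd_of_pow_eq_one hτi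
    exact Nat.eq_zero_of_dvd_of_lt this hi
  -- cardinality of K
  have hsurj := ZMod.unitsMap_surjective (pow_dvd_pow p hkν)
  have hcard1 : Nat.card (ZMod q)ˣ = Nat.card ((ZMod q)ˣ ⧸ K) * Nat.card K :=
    Subgroup.card_eq_card_quotient_mul_card_subgroup K
  have hquot : Nat.card ((ZMod q)ˣ ⧸ K) = Nat.card (ZMod (p ^ k))ˣ := by
    rw [hK]
    exact Nat.card_congr (QuotientGroup.quotientKerEquivOfSurjective _ hsurj).toEquiv
  have htq : Nat.card (ZMod q)ˣ = q.totient := by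
    rw [Nat.card_eq_fintype_card, ZMod.card_units_eq_totient]
  have htk : Nat.card (ZMod (p ^ k))ˣ = (p ^ k).totient := by
    rw [Nat.card_eq_fintype_card, ZMod.card_units_eq_totient]
  have hcardK : Nat.card K = n := by
    have h1 : q.totient = (p ^ k).totient * Nat.card K := by
      rw [← htq, ← htk, ← hquot]; exact hcard1
    rw [hq, Nat.totient_prime_pow hp (by omega : 0 < ν),
      Nat.totient_prime_pow hp (by omega : 0 < k)] at h1
    have h2 : p ^ (ν - 1) = p ^ (k - 1) * n := by
      rw [hn, ← pow_add, show k - 1 + (ν - k) = ν - 1 by omega]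
    have h3 : p ^ (k - 1) * (p - 1) * n = p ^ (k - 1) * (p - 1) * Nat.card K := by
      calc p ^ (k - 1) * (p - 1) * n = p ^ (ν - 1) * (p - 1) := by rw [h2]; ring
      _ = p ^ (k - 1) * (p - 1) * Nat.card K := h1
    exact (Nat.eq_of_mul_eq_mul_left (Nat.mul_pos (pow_pos (by omega) _) (by omega)) h3).symm
  -- generation
  have htop : Subgroup.zpowers τ = (⊤ : Subgroup K) := by
    apply Subgroup.eq_top_of_card_eq
    rw [Nat.card_zpowers, horder, hcardK]
  have hfin : IsOfFinOrder τ := by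
    rw [← orderOf_pos_iff, horder]; exact hn0
  have hgen : ∀ g : K, ∃ i < n, τ ^ i = g := by
    intro g
    have hg : g ∈ Subgroup.zpowers τ := htop ▸ Subgroup.mem_top g
    obtain ⟨i, hi⟩ := (Submonoid.mem_powers_iff _ _).mp (hfin.mem_powers_iff_mem_zpowers.mpr hg)
    refine ⟨i % n, Nat.mod_lt _ hn0, ?_⟩
    rw [← horder]
    rw [pow_mod_orderOf, hi]
  -- the norm hypothesis
  have hρ : ∀ (g : K) (m : ZMod q), A.ρ g m = ((g : (ZMod q)ˣ) : ZMod q) * m := fun _ _ => rfl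
  have hnorm : ∀ m : ZMod q, A.ρ τ m = m →
      ∃ a : ZMod q, ∑ j ∈ Finset.range n, A.ρ (τ ^ j) a = m := by
    intro m hm
    rw [hρ] at hm
    have hm' : ((1 + p ^ k : ℕ) : ZMod q) * m = m := by rw [← hτuval]; exact hm
    have hpk0 : ((p ^ k : ℕ) : ZMod q) * m = 0 := by
      have e : ((1 + p ^ k : ℕ) : ZMod q) = 1 + ((p ^ k : ℕ) : ZMod q) := by push_cast; ring
      rw [e] at hm'
      linear_combination hm'
    have hdvd1 : q ∣ p ^ k * m.val := by
      rw [← ZMod.natCast_eq_zero_iff]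
      push_cast at hpk0 ⊢
      rw [ZMod.natCast_zmod_val]
      exact hpk0
    have hdvd2 : p ^ (ν - k) ∣ m.val := by
      have e : q = p ^ k * p ^ (ν - k) := by rw [hq, ← pow_add]; congr 1; omega
      have hdvd1' : p ^ k * p ^ (ν - k) ∣ p ^ k * m.val := by rw [← e]; exact hdvd1
      exact (Nat.mul_dvd_mul_iff_left (show 0 < p ^ k by positivity)).mp hdvd1'
    obtain ⟨d, hd⟩ := hdvd2
    have hmval : m = ((p ^ (ν - k) : ℕ) : ZMod q) * (d : ZMod q) := by
      conv_lhs => rw [← ZMod.natCast_zmod_val m]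
      rw [hd]
      push_cast
      ring
    obtain ⟨u, hu, hpu⟩ := keyNT p hp k hk h2 (ν - k)
    have hS : (∑ j ∈ Finset.range n, (1 + (p : ℤ) ^ k) ^ j) = (p : ℤ) ^ (ν - k) * u := by
      have hg := geom_sum_mul (1 + (p : ℤ) ^ k) n
      have e1 : (1 + (p : ℤ) ^ k) - 1 = (p : ℤ) ^ k := by ring
      rw [e1] at hg
      have e2 : (1 + (p : ℤ) ^ k) ^ n - 1 = (p : ℤ) ^ (ν - k) * u * (p : ℤ) ^ k := by
        rw [hn, hu, show k + (ν - k) = ν by omega]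
        rw [show (p : ℤ) ^ (ν - k) * u * (p : ℤ) ^ k = (p : ℤ) ^ ((ν - k) + k) * u by
          rw [pow_add]; ring]
        rw [show ν - k + k = ν by omega]
        ring
      rw [e2] at hg
      exact mul_right_cancel₀ (pow_ne_zero k hpZ.ne_zero) hg
    have hco : IsCoprime ((p : ℤ) ^ ν) u := (hpZ.coprime_iff_not_dvd.mpr hpu).pow_left
    obtain ⟨α, β, hαβ⟩ := hco
    have hone : (β : ZMod q) * ((u : ℤ) : ZMod q) = 1 := by
      have hc : ((α * (p : ℤ) ^ ν + β * u : ℤ) : ZMod q) = 1 := by rw [hαβ]; push_cast; ring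
      push_cast at hc
      have hz : ((p : ZMod q)) ^ ν = 0 := by
        have hz1 : ((q : ℕ) : ZMod q) = 0 := ZMod.natCast_self q
        rw [hq] at hz1
        push_cast at hz1
        exact hz1
      rw [hz, mul_zero, zero_add] at hc
      exact hc
    refine ⟨(β : ZMod q) * (d : ZMod q), ?_⟩
    have hScast : (∑ j ∈ Finset.range n, ((1 + p ^ k : ℕ) : ZMod q) ^ j)
        = ((p ^ (ν - k) : ℕ) : ZMod q) * ((u : ℤ) : ZMod q) := by
      have hc2 := congrArg (fun z : ℤ => ((z : ZMod q) : ZMod q)) hS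
      push_cast at hc2 ⊢
      exact hc2
    have key : (∑ j ∈ Finset.range n,
        (((τ ^ j : K) : (ZMod q)ˣ) : ZMod q) * ((β : ZMod q) * (d : ZMod q))) = m := by
      have hsum2 : ∑ j ∈ Finset.range n,
          (((τ ^ j : K) : (ZMod q)ˣ) : ZMod q) * ((β : ZMod q) * (d : ZMod q))
          = (∑ j ∈ Finset.range n, ((1 + p ^ k : ℕ) : ZMod q) ^ j) *
            ((β : ZMod q) * (d : ZMod q)) := by
        rw [Finset.sum_mul]
        exact Finset.sum_congr rfl fun j _ => by rw [hτpow j]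
      rw [hsum2, hScast, hmval]
      linear_combination (((p ^ (ν - k) : ℕ) : ZMod q) * (d : ZMod q)) * hone
    exact key
  -- conclusion
  refine ⟨fun x y => ?_⟩
  refine H2_induction_on x fun x => ?_
  refine H2_induction_on y fun y => ?_
  rw [H2π_eq_iff]
  exact cyclic_mem_twoCoboundaries A τ n hn0 hτn hord hgen hnorm (x - y)
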